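/- Let (X, dist) be a nonempty compact metric space and let μ be a Borel probability measure on X that is Ahlfors regular of dimension D > 0 with constants c₁, c₂ > 0, and whose ball volumes are Lipschitz in the radius with constant c₃ > 0 (i.e., μ(B(s, ρ+h)) − μ(B(s, ρ)) ≤ c₃·h for all s ∈ X and all ρ, h ≥ 0). For every M > 0 there exists a constant C > 0, depending only on D, c₁, c₂, c₃, diam(X) and M, with the following property. Let N ≥ 2 be an integer, let V > 0, and let x₁, …, x_N be random points of X defined on a common probability space such that for every open metric ball A ⊆ X the counting variable N_A = #{i ∈ {1,…,N} : x_i ∈ A} satisfies: (i) E[N_A] = N·μ(A); (ii) Var(N_A) ≤ V; (iii) P(|N_A − E[N_A]| ≥ t) ≤ 2·e^{−t/4} for every t ≥ Var(N_A), and P(|N_A − E[N_A]| ≥ t) ≤ 2·e^{−t²/(4·Var(N_A))} for every 0 < t ≤ Var(N_A). Then, with probability at least 1 − N^{−M}, one has sup_A |N_A − N·μ(A)| ≤ C·(log N + √(V·log N)), where the supremum is over all open metric balls A ⊆ X. -/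

import Mathlib

open MeasureTheory ProbabilityTheory Metric Real

/-- `countIn x A ω` is the number of indices `i` such that the random point `x i ω` lies
in the set `A`. -/
noncomputable def countIn {Ω X : Type*} {N : ℕ} (x : Fin N → Ω → X) (A : Set X) (ω : Ω) : ℕ :=
  Nat.card {i : Fin N // x i ω ∈ A}

lemma countIn_mono {Ω X : Type*} {N : ℕ} (x : Fin N → Ω → X) {A B : Set X} (h : A ⊆ B) (ω : Ω) :
    countIn x A ω ≤ countIn x B ω := by
  exact Nat.card_le_card_of_injective
    (Set.inclusion (fun i (hi : x i ω ∈ A) => h hi)) (Set.inclusion_injective _)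

lemma countIn_empty {Ω X : Type*} {N : ℕ} (x : Fin N → Ω → X) (ω : Ω) :
    countIn x (∅ : Set X) ω = 0 := by
  have : IsEmpty {i : Fin N // x i ω ∈ (∅ : Set X)} := ⟨fun i => i.2⟩
  simp [countIn]

lemma countIn_univ {Ω X : Type*} {N : ℕ} (x : Fin N → Ω → X) (ω : Ω) :
    countIn x (Set.univ : Set X) ω = N := by
  rw [countIn, Nat.card_congr (Equiv.subtypeUnivEquiv (fun i => Set.mem_univ _))]
  simp

lemma exists_net {X : Type*} [MetricSpace X] [MeasurableSpace X] [BorelSpace X]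
    (μ : Measure X) [IsProbabilityMeasure μ] (D c₁ : ℝ) (hc₁ : 0 < c₁)
    (hreg : ∀ (x : X) (r : ℝ), 0 < r → r < Metric.diam (Set.univ : Set X) →
      c₁ * r ^ D ≤ (μ (Metric.ball x r)).toReal)
    (ε : ℝ) (hε : 0 < ε) (hεd : ε / 2 < Metric.diam (Set.univ : Set X)) :
    ∃ S : Finset X, (S.card : ℝ) ≤ (2 / ε) ^ D / c₁ ∧
      ∀ y : X, ∃ s ∈ S, dist y s < ε := by
  classical
  set q : ℝ := c₁ * (ε / 2) ^ D with hq
  have hrp : (0:ℝ) < (ε / 2) ^ D := Real.rpow_pos_of_pos (by linarith) D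
  have hqpos : 0 < q := mul_pos hc₁ hrp
  have hcard : ∀ F : Finset X, (∀ a ∈ F, ∀ b ∈ F, a ≠ b → ε ≤ dist a b) →
      (F.card : ℝ) * q ≤ 1 := by
    intro F hF
    have hdisj : (↑F : Set X).PairwiseDisjoint (fun a => Metric.ball a (ε / 2)) := by
      intro a ha b hb hab
      apply Metric.ball_disjoint_ball
      have := hF a ha b hb hab
      linarith
    have hmeas := MeasureTheory.measure_biUnion_finset (μ := μ) hdisj
      (fun b _ => measurableSet_ball)
    have hle : (μ (⋃ a ∈ F, Metric.ball a (ε / 2))).toReal ≤ 1 := by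
      have h1 : μ (⋃ a ∈ F, Metric.ball a (ε / 2)) ≤ 1 := by
        rw [← measure_univ (μ := μ)]
        exact measure_mono (Set.subset_univ _)
      have := ENNReal.toReal_mono (by simp) h1
      simpa using this
    calc (F.card : ℝ) * q = ∑ _a ∈ F, q := by rw [Finset.sum_const, nsmul_eq_mul]
      _ ≤ ∑ a ∈ F, (μ (Metric.ball a (ε / 2))).toReal :=
          Finset.sum_le_sum (fun a _ => hreg a (ε / 2) (by linarith) hεd)
      _ = (μ (⋃ a ∈ F, Metric.ball a (ε / 2))).toReal := by
          rw [hmeas, ENNReal.toReal_sum (fun a _ => measure_ne_top μ _)]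
      _ ≤ 1 := hle
  set T : Set ℕ := {n | ∃ F : Finset X,
    (∀ a ∈ F, ∀ b ∈ F, a ≠ b → ε ≤ dist a b) ∧ F.card = n} with hT
  have hT0 : 0 ∈ T := ⟨∅, by simp, rfl⟩
  have hTbdd : BddAbove T := by
    refine ⟨⌊1 / q⌋₊, ?_⟩
    rintro n ⟨F, hF, rfl⟩
    have h1 := hcard F hF
    exact Nat.le_floor (by rw [le_div_iff₀ hqpos]; linarith)
  obtain ⟨F, hF, hFcard⟩ : sSup T ∈ T := Nat.sSup_mem ⟨0, hT0⟩ hTbdd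
  have hinv : (2 / ε) ^ D / c₁ = 1 / q := by
    have h1 : ((ε / 2) * (2 / ε)) = 1 := by field_simp
    have h2 : (ε / 2) ^ D * (2 / ε) ^ D = 1 := by
      rw [← Real.mul_rpow (by linarith) (by positivity), h1, Real.one_rpow]
    rw [hq]
    field_simp
    nlinarith [h2]
  refine ⟨F, ?_, ?_⟩
  · rw [hinv]
    have h1 := hcard F hF
    rw [le_div_iff₀ hqpos]
    linarith
  · intro y
    by_contra hcon
    push_neg at hcon
    have hyF : y ∉ F := fun hy => by
      have := hcon y hy
      simp only [dist_self] at this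
      linarith
    have hins : ∀ a ∈ insert y F, ∀ b ∈ insert y F, a ≠ b → ε ≤ dist a b := by
      intro a ha b hb hab
      rcases Finset.mem_insert.mp ha with rfl | ha' <;>
        rcases Finset.mem_insert.mp hb with rfl | hb'
      · exact absurd rfl hab
      · exact hcon b hb'
      · rw [dist_comm]; exact hcon a ha'
      · exact hF a ha' b hb' hab
    have hmem : F.card + 1 ∈ T :=
      ⟨insert y F, hins, by rw [Finset.card_insert_of_notMem hyF]⟩
    have := le_csSup hTbdd hmem
    omega

lemma arith_t0_sq (a w u : ℝ) (ha : 0 ≤ a) (hw : 0 ≤ w) (hu : 0 ≤ u) :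
    4 * a * w ≤ (u + 2 * Real.sqrt a * Real.sqrt w) ^ 2 := by
  have h1 := Real.sq_sqrt ha
  have h2 := Real.sq_sqrt hw
  have h3 := Real.sqrt_nonneg a
  have h4 := Real.sqrt_nonneg w
  nlinarith [sq_nonneg u, mul_nonneg (mul_nonneg h3 h4) hu]

lemma arith_exp_small (t v V l aa : ℝ) (hv : 0 < v) (hvV : v ≤ V) (hl : 0 < l) (ha : 0 < aa)
    (hsq : 4 * aa * (V * l) ≤ t ^ 2) : -t ^ 2 / (4 * v) ≤ -(aa / 4) * l := by
  rw [div_le_iff₀ (by positivity : (0:ℝ) < 4 * v)]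
  nlinarith [mul_le_mul_of_nonneg_left hvV (mul_pos ha hl).le]


set_option maxHeartbeats 2000000 in
/-- Discrepancy bound for random point configurations whose ball-counting variables have the
correct expectation, variance at most `V`, and satisfy Bernstein--Chernoff tail bounds, on a
compact Ahlfors regular metric measure space whose ball volumes are Lipschitz in the radius:
with probability at least `1 - N^{-M}`, the discrepancy with respect to metric balls is at
most `C (log N + √(V log N))`. -/
theorem discrepancy_of_concentrated_point_process {X : Type*} [MetricSpace X] [CompactSpace X]
    [Nonempty X] [MeasurableSpace X] [BorelSpace X] (μ : Measure X) [IsProbabilityMeasure μ]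
    (D c₁ c₂ c₃ : ℝ) (hD : 0 < D) (hc₁ : 0 < c₁) (hc₂ : 0 < c₂) (hc₃ : 0 < c₃)
    (hreg : ∀ (x : X) (r : ℝ), 0 < r → r < Metric.diam (Set.univ : Set X) →
      c₁ * r ^ D ≤ (μ (Metric.ball x r)).toReal ∧
        (μ (Metric.ball x r)).toReal ≤ c₂ * r ^ D)
    (hlip : ∀ (s : X) (ρ h : ℝ), 0 ≤ ρ → 0 ≤ h →
      (μ (Metric.ball s (ρ + h))).toReal - (μ (Metric.ball s ρ)).toReal ≤ c₃ * h)
    (M : ℝ) (hM : 0 < M) :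
    ∃ C > (0 : ℝ), ∀ (Ω : Type) (mΩ : MeasurableSpace Ω) (P : Measure Ω),
      IsProbabilityMeasure P →
      ∀ N : ℕ, 2 ≤ N → ∀ V : ℝ, 0 < V → ∀ x : Fin N → Ω → X,
      -- (i) correct expectation on every open ball
      (∀ (s : X) (ρ : ℝ),
        ∫ ω, (countIn x (Metric.ball s ρ) ω : ℝ) ∂P = N * (μ (Metric.ball s ρ)).toReal) →
      -- (ii) variance at most `V` on every open ball
      (∀ (s : X) (ρ : ℝ),
        variance (fun ω => (countIn x (Metric.ball s ρ) ω : ℝ)) P ≤ V) →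
      -- (iii) Bernstein--Chernoff tail bound, large deviations
      (∀ (s : X) (ρ : ℝ) (t : ℝ),
        variance (fun ω => (countIn x (Metric.ball s ρ) ω : ℝ)) P ≤ t →
        P {ω | t ≤ |(countIn x (Metric.ball s ρ) ω : ℝ)
            - N * (μ (Metric.ball s ρ)).toReal|} ≤ ENNReal.ofReal (2 * Real.exp (-t / 4))) →
      -- (iii) Bernstein--Chernoff tail bound, small deviations
      (∀ (s : X) (ρ : ℝ) (t : ℝ), 0 < t →
        t ≤ variance (fun ω => (countIn x (Metric.ball s ρ) ω : ℝ)) P →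
        P {ω | t ≤ |(countIn x (Metric.ball s ρ) ω : ℝ)
            - N * (μ (Metric.ball s ρ)).toReal|} ≤
          ENNReal.ofReal (2 * Real.exp
            (-t ^ 2 / (4 * variance (fun ω => (countIn x (Metric.ball s ρ) ω : ℝ)) P)))) →
      ENNReal.ofReal (1 - (N : ℝ) ^ (-M)) ≤
        P {ω | ∀ (s : X) (ρ : ℝ),
          |(countIn x (Metric.ball s ρ) ω : ℝ) - N * (μ (Metric.ball s ρ)).toReal| ≤
            C * (Real.log N + Real.sqrt (V * Real.log N))} := by
  classical
  rcases eq_or_lt_of_le (Metric.diam_nonneg (s := (Set.univ : Set X))) with hd0 | hd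
  ·
    refine ⟨1, one_pos, ?_⟩
    intro Ω mΩ P hP N hN V hV x _ _ _ _
    have hsub : ∀ y z : X, y = z := by
      intro y z
      have hb : Bornology.IsBounded (Set.univ : Set X) := isCompact_univ.isBounded
      have h := Metric.dist_le_diam_of_mem hb (Set.mem_univ y) (Set.mem_univ z)
      rw [← hd0] at h
      exact dist_le_zero.mp (le_antisymm h dist_nonneg ▸ h)
    have hlogN : (0:ℝ) ≤ Real.log N := Real.log_nonneg (by exact_mod_cast Nat.one_le_of_lt hN)
    have hset : {ω : Ω | ∀ (s : X) (ρ : ℝ),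
        |(countIn x (Metric.ball s ρ) ω : ℝ) - N * (μ (Metric.ball s ρ)).toReal| ≤
          1 * (Real.log N + Real.sqrt (V * Real.log N))} = Set.univ := by
      apply Set.eq_univ_of_forall
      intro ω s ρ
      have hsq := Real.sqrt_nonneg (V * Real.log N)
      rcases le_or_gt ρ 0 with hρ | hρ
      · rw [Metric.ball_eq_empty.mpr hρ, countIn_empty x ω]
        simp only [measure_empty, ENNReal.toReal_zero, mul_zero, Nat.cast_zero, sub_zero, abs_zero]
        linarith
      · have hb : Metric.ball s ρ = Set.univ := by
          apply Set.eq_univ_of_forall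
          intro y
          simp only [Metric.mem_ball]
          rw [hsub y s]
          simpa using hρ
        rw [hb, countIn_univ x ω]
        simp only [measure_univ, ENNReal.toReal_one, mul_one, sub_self, abs_zero]
        linarith
    rw [hset, measure_univ]
    exact ENNReal.ofReal_le_one.mpr (by
      have : (0:ℝ) ≤ (N:ℝ) ^ (-M) := Real.rpow_nonneg (by positivity) _
      linarith)
  ·
    set d : ℝ := Metric.diam (Set.univ : Set X) with hdd
    set β : ℝ := min (Real.log 2) (d / 2) with hβ
    have hlog2 : (0:ℝ) < Real.log 2 := Real.log_pos one_lt_two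
    have hβpos : 0 < β := lt_min hlog2 (by linarith)
    set A₁ : ℝ := (2 / β) ^ D / c₁ with hA₁
    have hA₁pos : 0 < A₁ := div_pos (Real.rpow_pos_of_pos (by positivity) D) hc₁
    set A₂ : ℝ := d / β + 4 with hA₂
    have hA₂pos : 0 < A₂ := by positivity
    set A₃ : ℝ := A₁ * A₂ with hA₃
    have hA₃pos : 0 < A₃ := mul_pos hA₁pos hA₂pos
    set L : ℝ := max 0 (Real.log (2 * A₃)) with hL
    have hLnn : 0 ≤ L := le_max_left _ _
    set a : ℝ := 4 * (D + 1 + M) + 4 * L / Real.log 2 + 4 with ha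
    have hapos : 0 < a := by
      rw [ha]
      have h2 : 0 ≤ 4 * L / Real.log 2 := by positivity
      nlinarith
    have hsqa : 0 ≤ Real.sqrt a := Real.sqrt_nonneg a
    clear_value d β A₁ A₂ A₃ L a
    refine ⟨a + 4 * c₃ + 2 * Real.sqrt a + 1, by nlinarith, ?_⟩
    intro Ω mΩ P hP N hN V hV x hmean hvar hLarge hSmall
    set C : ℝ := a + 4 * c₃ + 2 * Real.sqrt a + 1 with hC
    clear_value C
    have hN1 : (1:ℝ) ≤ (N:ℝ) := by exact_mod_cast Nat.one_le_of_lt hN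
    have hN2 : (2:ℝ) ≤ (N:ℝ) := by exact_mod_cast hN
    have hNpos : (0:ℝ) < N := by linarith
    have hlogN2 : Real.log 2 ≤ Real.log N := Real.log_le_log (by norm_num) hN2
    have hlogNpos : 0 < Real.log N := lt_of_lt_of_le hlog2 hlogN2
    set ε : ℝ := min (Real.log N / N) (d / 2) with hε
    have hεpos : 0 < ε := lt_min (by positivity) (by linarith)
    have hεle : ε ≤ Real.log N / N := min_le_left _ _
    have hNε : (N:ℝ) * ε ≤ Real.log N := by
      calc (N:ℝ) * ε ≤ (N:ℝ) * (Real.log N / N) :=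
            mul_le_mul_of_nonneg_left hεle hNpos.le
        _ = Real.log N := by field_simp
    have hεd2 : ε / 2 < d := by
      have h := min_le_right (Real.log N / N) (d / 2)
      rw [← hε] at h
      linarith
    have hβlogN : β ≤ Real.log N := by
      rw [hβ]
      exact le_trans (min_le_left _ _) hlogN2
    have hεβ : β / N ≤ ε := by
      apply le_min
      · gcongr
      · calc β / N ≤ β := div_le_self hβpos.le hN1
          _ ≤ d / 2 := by rw [hβ]; exact min_le_right _ _
    have hβNε : β ≤ (N:ℝ) * ε := by
      calc β = (N:ℝ) * (β / N) := by field_simp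
        _ ≤ (N:ℝ) * ε := mul_le_mul_of_nonneg_left hεβ hNpos.le
    clear_value ε
    obtain ⟨S, hScard, hSnet⟩ :=
      exists_net μ D c₁ hc₁ (fun y r h1 h2 => (hreg y r h1 (hdd ▸ h2)).1) ε hεpos (hdd ▸ hεd2)
    have hScard' : (S.card : ℝ) ≤ A₁ * (N:ℝ) ^ D := by
      have h2ε : 2 / ε ≤ 2 * N / β := by
        rw [div_le_div_iff₀ hεpos hβpos]
        nlinarith
      calc (S.card : ℝ) ≤ (2 / ε) ^ D / c₁ := hScard
        _ ≤ (2 * N / β) ^ D / c₁ := by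
            have h := Real.rpow_le_rpow (by positivity : (0:ℝ) ≤ 2 / ε) h2ε hD.le
            exact (div_le_div_iff_of_pos_right hc₁).mpr h
        _ = A₁ * (N:ℝ) ^ D := by
            rw [hA₁, show (2 * (N:ℝ) / β) = (2 / β) * N by ring,
              Real.mul_rpow (by positivity) (by positivity)]
            ring
    set K : ℕ := ⌈d / ε⌉₊ + 2 with hK
    have hKcard : ((K : ℝ) + 1) ≤ A₂ * N := by
      have h1 : (⌈d / ε⌉₊ : ℝ) < d / ε + 1 := Nat.ceil_lt_add_one (by positivity)
      have h2 : d / ε ≤ (d / β) * N := by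
        rw [div_le_iff₀ hεpos]
        calc d = (d / β) * β := by field_simp
          _ ≤ (d / β) * ((N:ℝ) * ε) :=
              mul_le_mul_of_nonneg_left hβNε (by positivity)
          _ = (d / β) * N * ε := by ring
      have h4 : (4:ℝ) ≤ 4 * N := by linarith
      rw [hK, hA₂]
      push_cast
      nlinarith
    clear_value K
    set t₀ : ℝ := a * Real.log N + 2 * Real.sqrt a * Real.sqrt (V * Real.log N) with ht₀
    have hsqV : 0 ≤ Real.sqrt (V * Real.log N) := Real.sqrt_nonneg _
    have ht₀alog : a * Real.log N ≤ t₀ := by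
      rw [ht₀]
      linarith only [mul_nonneg (mul_nonneg (by norm_num : (0:ℝ) ≤ 2) hsqa) hsqV]
    have ht₀pos : 0 < t₀ := lt_of_lt_of_le (by positivity) ht₀alog
    clear_value t₀
    set I : Finset (X × ℕ) := S ×ˢ Finset.range (K + 1) with hI
    set Δ : X × ℕ → Ω → ℝ := fun p ω =>
      (countIn x (Metric.ball p.1 ((p.2 : ℝ) * ε)) ω : ℝ)
        - N * (μ (Metric.ball p.1 ((p.2 : ℝ) * ε))).toReal with hΔ
    clear_value I Δ
    -- per-event bound
    have hevent : ∀ p ∈ I, P {ω | t₀ ≤ |Δ p ω|} ≤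
        ENNReal.ofReal (2 * Real.exp (-(a / 4) * Real.log N)) := by
      intro p hp
      simp only [hΔ]
      set v : ℝ := variance (fun ω =>
        (countIn x (Metric.ball p.1 ((p.2 : ℝ) * ε)) ω : ℝ)) P with hv
      rcases le_or_gt v t₀ with hcase | hcase
      · refine le_trans (hLarge p.1 ((p.2 : ℝ) * ε) t₀ hcase) ?_
        apply ENNReal.ofReal_le_ofReal
        have h1 : -t₀ / 4 ≤ -(a / 4) * Real.log N := by linarith only [ht₀alog]
        have h2 := Real.exp_le_exp.mpr h1
        linarith only [h2]
      · have hvpos : 0 < v := ht₀pos.trans hcase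
        have hvV : v ≤ V := hvar p.1 ((p.2 : ℝ) * ε)
        refine le_trans (hSmall p.1 ((p.2 : ℝ) * ε) t₀ ht₀pos hcase.le) ?_
        apply ENNReal.ofReal_le_ofReal
        have hsq : 4 * a * (V * Real.log N) ≤ t₀ ^ 2 := by
          rw [ht₀]
          exact arith_t0_sq a (V * Real.log N) (a * Real.log N) hapos.le
            (by positivity) (by positivity)
        have hexp := arith_exp_small t₀ v V (Real.log N) a hvpos hvV hlogNpos hapos hsq
        have h2 := Real.exp_le_exp.mpr hexp
        linarith only [h2]
    -- union bound
    have hBadle : P (⋃ p ∈ I, {ω | t₀ ≤ |Δ p ω|}) ≤ ENNReal.ofReal ((N:ℝ) ^ (-M)) := by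
      have hcardI : ((I.card : ℝ)) ≤ A₃ * (N:ℝ) ^ (D + 1) := by
        rw [hI, Finset.card_product, Finset.card_range]
        push_cast
        calc (S.card : ℝ) * ((K:ℝ) + 1) ≤ (A₁ * (N:ℝ) ^ D) * (A₂ * N) :=
              mul_le_mul hScard' hKcard (by positivity) (by positivity)
          _ = A₃ * ((N:ℝ) ^ D * (N:ℝ)) := by rw [hA₃]; ring
          _ = A₃ * (N:ℝ) ^ (D + 1) := by
              rw [Real.rpow_add_one (ne_of_gt hNpos)]
      have hsuff : 2 * A₃ * (N:ℝ) ^ (-(L / Real.log 2) - 1) ≤ 1 := by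
        have hz : 0 ≤ L / Real.log 2 + 1 := by positivity
        have e1 : (L / Real.log 2 + 1) * Real.log 2 ≤ (L / Real.log 2 + 1) * Real.log N :=
          mul_le_mul_of_nonneg_left hlogN2 hz
        have e2 : (L / Real.log 2 + 1) * Real.log 2 = L + Real.log 2 := by
          field_simp
        have e3 : Real.log (2 * A₃) ≤ L := by rw [hL]; exact le_max_right _ _
        have h1 : 2 * A₃ ≤ Real.exp ((L / Real.log 2 + 1) * Real.log N) := by
          rw [show 2 * A₃ = Real.exp (Real.log (2 * A₃)) from
            (Real.exp_log (by positivity)).symm]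
          apply Real.exp_le_exp.mpr
          linarith only [e1, e2, e3, hlog2]
        have h2 : (N:ℝ) ^ (-(L / Real.log 2) - 1)
            = (Real.exp ((L / Real.log 2 + 1) * Real.log N))⁻¹ := by
          rw [Real.rpow_def_of_pos hNpos, ← Real.exp_neg]
          congr 1
          ring
        rw [h2, ← div_eq_mul_inv, div_le_one (Real.exp_pos _)]
        exact h1
      have hkey : 2 * A₃ * (N:ℝ) ^ (D + 1) * (N:ℝ) ^ (-(a / 4) : ℝ) ≤ (N:ℝ) ^ (-M) := by
        have hexpand : D + 1 + -(a / 4) = (-(L / Real.log 2) - 1) + -M := by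
          rw [ha]
          field_simp
          ring
        have hsplit : (N:ℝ) ^ (D + 1) * (N:ℝ) ^ (-(a / 4) : ℝ)
            = (N:ℝ) ^ (-(L / Real.log 2) - 1) * (N:ℝ) ^ (-M) := by
          rw [← Real.rpow_add hNpos, ← Real.rpow_add hNpos, hexpand]
        calc 2 * A₃ * (N:ℝ) ^ (D + 1) * (N:ℝ) ^ (-(a / 4) : ℝ)
            = 2 * A₃ * ((N:ℝ) ^ (D + 1) * (N:ℝ) ^ (-(a / 4) : ℝ)) := by ring
          _ = (2 * A₃ * (N:ℝ) ^ (-(L / Real.log 2) - 1)) * (N:ℝ) ^ (-M) := by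
              rw [hsplit]; ring
          _ ≤ 1 * (N:ℝ) ^ (-M) :=
              mul_le_mul_of_nonneg_right hsuff (Real.rpow_nonneg hNpos.le _)
          _ = (N:ℝ) ^ (-M) := one_mul _
      have hfinal : (I.card : ℝ) * (2 * Real.exp (-(a / 4) * Real.log N)) ≤ (N:ℝ) ^ (-M) := by
        have hrw : Real.exp (-(a / 4) * Real.log N) = (N:ℝ) ^ (-(a / 4) : ℝ) := by
          rw [Real.rpow_def_of_pos hNpos]
          congr 1
          ring
        calc (I.card : ℝ) * (2 * Real.exp (-(a / 4) * Real.log N))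
            ≤ (A₃ * (N:ℝ) ^ (D + 1)) * (2 * Real.exp (-(a / 4) * Real.log N)) :=
              mul_le_mul_of_nonneg_right hcardI (by positivity)
          _ = 2 * A₃ * (N:ℝ) ^ (D + 1) * (N:ℝ) ^ (-(a / 4) : ℝ) := by rw [hrw]; ring
          _ ≤ (N:ℝ) ^ (-M) := hkey
      calc P (⋃ p ∈ I, {ω | t₀ ≤ |Δ p ω|}) ≤ ∑ p ∈ I, P {ω | t₀ ≤ |Δ p ω|} :=
            measure_biUnion_finset_le _ _
        _ ≤ ∑ _p ∈ I, ENNReal.ofReal (2 * Real.exp (-(a / 4) * Real.log N)) :=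
            Finset.sum_le_sum hevent
        _ = I.card • ENNReal.ofReal (2 * Real.exp (-(a / 4) * Real.log N)) :=
            Finset.sum_const _
        _ = (I.card : ENNReal) * ENNReal.ofReal (2 * Real.exp (-(a / 4) * Real.log N)) :=
            nsmul_eq_mul _ _
        _ = ENNReal.ofReal ((I.card : ℝ) * (2 * Real.exp (-(a / 4) * Real.log N))) := by
            rw [← ENNReal.ofReal_natCast I.card, ← ENNReal.ofReal_mul (by positivity)]
        _ ≤ ENNReal.ofReal ((N:ℝ) ^ (-M)) := ENNReal.ofReal_le_ofReal hfinal
    set G : Set Ω := {ω | ∀ p ∈ I, |Δ p ω| < t₀} with hG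
    have hGood : G ⊆ {ω | ∀ (s : X) (ρ : ℝ),
        |(countIn x (Metric.ball s ρ) ω : ℝ) - N * (μ (Metric.ball s ρ)).toReal| ≤
          C * (Real.log N + Real.sqrt (V * Real.log N))} := by
      intro ω hω
      simp only [hG, Set.mem_setOf_eq] at hω
      have hω' : ∀ s₀ ∈ S, ∀ k ∈ Finset.range (K + 1),
          |(countIn x (Metric.ball s₀ ((k : ℝ) * ε)) ω : ℝ)
            - N * (μ (Metric.ball s₀ ((k : ℝ) * ε))).toReal| < t₀ := by
        intro s₀ hs₀ k hk
        have hmem : (s₀, k) ∈ I := by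
          rw [hI]
          exact Finset.mem_product.mpr ⟨hs₀, hk⟩
        have := hω (s₀, k) hmem
        simpa [hΔ] using this
      intro s ρ
      have hCpos : 0 < C := by rw [hC]; linarith only [hapos, hc₃, hsqa]
      have hRHSpos : 0 ≤ C * (Real.log N + Real.sqrt (V * Real.log N)) := by
        have h1 : 0 ≤ Real.log N + Real.sqrt (V * Real.log N) := by
          linarith [hsqV, hlogNpos]
        positivity
      have hfin : t₀ + 4 * c₃ * Real.log N
          ≤ C * (Real.log N + Real.sqrt (V * Real.log N)) := by
        rw [hC, ht₀]
        nlinarith only [mul_nonneg hapos.le hsqV, mul_nonneg hc₃.le hsqV,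
          mul_nonneg hsqa hlogNpos.le, hsqV, hlogNpos, hc₃, hapos]
      rcases le_or_gt ρ 0 with hρ0 | hρ0
      · rw [Metric.ball_eq_empty.mpr hρ0, countIn_empty x ω]
        simpa using hRHSpos
      · set ρ' := min ρ (d + ε) with hρ'd
        have hρ'pos : 0 < ρ' := lt_min hρ0 (by linarith)
        have hρ'le : ρ' ≤ d + ε := min_le_right _ _
        have hballeq : Metric.ball s ρ = Metric.ball s ρ' := by
          rcases le_or_gt ρ (d + ε) with hcase | hcase
          · rw [hρ'd, min_eq_left hcase]
          · have hρeq : ρ' = d + ε := by rw [hρ'd, min_eq_right hcase.le]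
            ext y
            simp only [Metric.mem_ball]
            have hy : dist y s ≤ d := hdd ▸ Metric.dist_le_diam_of_mem
              isCompact_univ.isBounded (Set.mem_univ y) (Set.mem_univ s)
            constructor
            · intro _
              rw [hρeq]
              linarith
            · intro _
              linarith
        rw [hballeq]
        obtain ⟨s', hs'S, hs's⟩ := hSnet s
        have hds : dist s' s < ε := by rw [dist_comm]; exact hs's
        set k₂ : ℕ := ⌈ρ' / ε⌉₊ + 1 with hk₂
        set k₁ : ℕ := ⌊(ρ' - ε) / ε⌋₊ with hk₁
        have hk₂range : k₂ ∈ Finset.range (K + 1) := by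
          rw [Finset.mem_range, hK, hk₂]
          have h1 : ρ' / ε ≤ d / ε + 1 := by
            rw [show d / ε + 1 = (d + ε) / ε by field_simp]
            gcongr
          have h2 : ⌈ρ' / ε⌉₊ ≤ ⌈d / ε + 1⌉₊ := Nat.ceil_le_ceil h1
          have h3 : ⌈d / ε + 1⌉₊ = ⌈d / ε⌉₊ + 1 := Nat.ceil_add_one (by positivity)
          omega
        have hk₂low : ρ' + ε ≤ (k₂ : ℝ) * ε := by
          have h1 := Nat.le_ceil (ρ' / ε)
          have h2 := mul_le_mul_of_nonneg_right h1 hεpos.le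
          rw [div_mul_cancel₀ _ (ne_of_gt hεpos)] at h2
          rw [hk₂]
          push_cast
          linarith only [h2]
        have hk₂high : (k₂ : ℝ) * ε ≤ ρ' + 2 * ε := by
          have h1 : (⌈ρ' / ε⌉₊ : ℝ) < ρ' / ε + 1 := Nat.ceil_lt_add_one (by positivity)
          have h2 := mul_le_mul_of_nonneg_right h1.le hεpos.le
          rw [add_mul, div_mul_cancel₀ _ (ne_of_gt hεpos)] at h2
          rw [hk₂]
          push_cast
          linarith only [h2, hεpos]
        have hk₁range : k₁ ∈ Finset.range (K + 1) := by
          rw [Finset.mem_range, hK, hk₁]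
          have h1 : (ρ' - ε) / ε ≤ d / ε := by
            gcongr
            linarith
          have h2 : ⌊(ρ' - ε) / ε⌋₊ ≤ ⌊d / ε⌋₊ := Nat.floor_le_floor h1
          have h3 : ⌊d / ε⌋₊ ≤ ⌈d / ε⌉₊ := Nat.floor_le_ceil _
          omega
        have hk₁high : ρ' - 2 * ε ≤ (k₁ : ℝ) * ε := by
          have h1 : (ρ' - ε) / ε - 1 < (k₁ : ℝ) := by
            rw [hk₁]
            exact_mod_cast Nat.sub_one_lt_floor _
          have h2 := mul_le_mul_of_nonneg_right h1.le hεpos.le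
          rw [sub_mul, div_mul_cancel₀ _ (ne_of_gt hεpos), one_mul] at h2
          linarith only [h2]
        have hk₁le : (k₁ : ℝ) * ε ≤ ρ' - ε ∨ ((k₁ : ℝ) * ε = 0 ∧ ρ' < ε) := by
          rcases le_or_gt ε ρ' with hcase | hcase
          · left
            have h1 : (k₁ : ℝ) ≤ (ρ' - ε) / ε := by
              rw [hk₁]
              exact Nat.floor_le (div_nonneg (by linarith) hεpos.le)
            have h2 := mul_le_mul_of_nonneg_right h1 hεpos.le
            rwa [div_mul_cancel₀ _ (ne_of_gt hεpos)] at h2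
          · right
            refine ⟨?_, hcase⟩
            have h0 : k₁ = 0 := by
              rw [hk₁]
              exact Nat.floor_of_nonpos (div_nonpos_iff.mpr (Or.inr ⟨by linarith, hεpos.le⟩))
            rw [h0]
            norm_num
        have hsub1 : Metric.ball s' ((k₁ : ℝ) * ε) ⊆ Metric.ball s ρ' := by
          rcases hk₁le with hc | hc
          · intro y hy
            rw [Metric.mem_ball] at hy ⊢
            have h3 := dist_triangle y s' s
            linarith
          · rw [hc.1, Metric.ball_eq_empty.mpr (le_refl (0:ℝ))]
            exact Set.empty_subset _
        have hsub2 : Metric.ball s ρ' ⊆ Metric.ball s' ((k₂ : ℝ) * ε) := by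
          intro y hy
          rw [Metric.mem_ball] at hy ⊢
          have h3 := dist_triangle y s s'
          linarith
        have hk₁le' : (k₁ : ℝ) * ε ≤ ρ' := by
          rcases hk₁le with hc | hc
          · linarith
          · rw [hc.1]
            exact hρ'pos.le
        have hμlip := hlip s' ((k₁ : ℝ) * ε) ((k₂ : ℝ) * ε - (k₁ : ℝ) * ε)
          (by positivity) (by linarith)
        rw [show (k₁ : ℝ) * ε + ((k₂ : ℝ) * ε - (k₁ : ℝ) * ε) = (k₂ : ℝ) * ε by ring] at hμlip
        have hg1 := hω' s' hs'S k₁ hk₁range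
        have hg2 := hω' s' hs'S k₂ hk₂range
        obtain ⟨hg1a, hg1b⟩ := abs_lt.mp hg1
        obtain ⟨hg2a, hg2b⟩ := abs_lt.mp hg2
        have hc1 : ((countIn x (Metric.ball s' ((k₁ : ℝ) * ε)) ω : ℝ))
            ≤ (countIn x (Metric.ball s ρ') ω : ℝ) := by
          exact_mod_cast countIn_mono x hsub1 ω
        have hc2 : ((countIn x (Metric.ball s ρ') ω : ℝ))
            ≤ (countIn x (Metric.ball s' ((k₂ : ℝ) * ε)) ω : ℝ) := by
          exact_mod_cast countIn_mono x hsub2 ω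
        have hμ1 : (μ (Metric.ball s' ((k₁ : ℝ) * ε))).toReal
            ≤ (μ (Metric.ball s ρ')).toReal :=
          ENNReal.toReal_mono (measure_ne_top μ _) (measure_mono hsub1)
        have hμ2 : (μ (Metric.ball s ρ')).toReal
            ≤ (μ (Metric.ball s' ((k₂ : ℝ) * ε))).toReal :=
          ENNReal.toReal_mono (measure_ne_top μ _) (measure_mono hsub2)
        have hNm1 : (N : ℝ) * (μ (Metric.ball s' ((k₁ : ℝ) * ε))).toReal
            ≤ (N : ℝ) * (μ (Metric.ball s ρ')).toReal :=
          mul_le_mul_of_nonneg_left hμ1 hNpos.le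
        have hNm2 : (N : ℝ) * (μ (Metric.ball s ρ')).toReal
            ≤ (N : ℝ) * (μ (Metric.ball s' ((k₂ : ℝ) * ε))).toReal :=
          mul_le_mul_of_nonneg_left hμ2 hNpos.le
        have hA : (N : ℝ) * ((μ (Metric.ball s' ((k₂ : ℝ) * ε))).toReal
            - (μ (Metric.ball s' ((k₁ : ℝ) * ε))).toReal) ≤ (N : ℝ) * (c₃ * (4 * ε)) := by
          have h1 : (μ (Metric.ball s' ((k₂ : ℝ) * ε))).toReal
              - (μ (Metric.ball s' ((k₁ : ℝ) * ε))).toReal ≤ c₃ * (4 * ε) := by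
            have h2 : c₃ * ((k₂ : ℝ) * ε - (k₁ : ℝ) * ε) ≤ c₃ * (4 * ε) :=
              mul_le_mul_of_nonneg_left (by linarith only [hk₂high, hk₁high]) hc₃.le
            linarith only [hμlip, h2]
          exact mul_le_mul_of_nonneg_left h1 hNpos.le
        have hB : (N : ℝ) * (c₃ * (4 * ε)) ≤ 4 * c₃ * Real.log N := by
          calc (N : ℝ) * (c₃ * (4 * ε)) = 4 * c₃ * ((N : ℝ) * ε) := by ring
            _ ≤ 4 * c₃ * Real.log N :=
                mul_le_mul_of_nonneg_left hNε (by positivity)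
        rw [abs_le]
        constructor
        · linarith only [hc1, hg1a, hNm2, hA, hB, hfin]
        · linarith only [hc2, hg2b, hNm1, hA, hB, hfin]
    have hunion : (Set.univ : Set Ω) ⊆ G ∪ (⋃ p ∈ I, {ω | t₀ ≤ |Δ p ω|}) := by
      intro ω _
      by_cases hcase : ∀ p ∈ I, |Δ p ω| < t₀
      · exact Or.inl hcase
      · push_neg at hcase
        obtain ⟨p, hpI, hple⟩ := hcase
        exact Or.inr (Set.mem_biUnion hpI hple)
    have h1 : (1 : ENNReal) ≤ P G + P (⋃ p ∈ I, {ω | t₀ ≤ |Δ p ω|}) := by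
      calc (1 : ENNReal) = P Set.univ := measure_univ.symm
        _ ≤ P (G ∪ ⋃ p ∈ I, {ω | t₀ ≤ |Δ p ω|}) := measure_mono hunion
        _ ≤ P G + P (⋃ p ∈ I, {ω | t₀ ≤ |Δ p ω|}) := measure_union_le _ _
    have h2 : ENNReal.ofReal 1 - ENNReal.ofReal ((N:ℝ) ^ (-M)) ≤ P G := by
      rw [ENNReal.ofReal_one]
      apply tsub_le_iff_right.mpr
      calc (1 : ENNReal) ≤ P G + P (⋃ p ∈ I, {ω | t₀ ≤ |Δ p ω|}) := h1
        _ ≤ P G + ENNReal.ofReal ((N:ℝ) ^ (-M)) := add_le_add le_rfl hBadle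
    calc ENNReal.ofReal (1 - (N:ℝ) ^ (-M))
        = ENNReal.ofReal 1 - ENNReal.ofReal ((N:ℝ) ^ (-M)) :=
          ENNReal.ofReal_sub _ (Real.rpow_nonneg hNpos.le _)
      _ ≤ P G := h2
      _ ≤ P _ := measure_mono hGood
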